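/- (Concretizer invariant) Throughout the concretizer's execution, the partially-built policy π satisfies: domain(π) ⊆ D, reach(π) ⊆ D ∪ F, and for every s ∈ domain(π), reach(π,s) ∩ F ≠ ∅. -/

import Mathlib

/-- The domain of a policy (partial function from states to actions). -/
def pdom {S A : Type*} (π : S → Option A) : Set S := {s | π s ≠ none}

/-- One π-transition step: from `s` take the action `π s` prescribes, landing in a successor. -/
def pstep {S A : Type*} (succs : S → A → Set S) (π : S → Option A) (s s' : S) : Prop :=
  ∃ a, π s = some a ∧ s' ∈ succs s a

/-- `reachFrom succs π s` : states reachable from `s` by π-trajectories (including `s`). -/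
def reachFrom {S A : Type*} (succs : S → A → Set S) (π : S → Option A) (s : S) : Set S :=
  {s' | Relation.ReflTransGen (pstep succs π) s s'}

/-- `reachAll succs π` : states reachable from some domain state of `π`. -/
def reachAll {S A : Type*} (succs : S → A → Set S) (π : S → Option A) : Set S :=
  ⋃ s ∈ pdom π, reachFrom succs π s

/-- Frontier of a policy: reachable but unmapped states. -/
def front {S A : Type*} (succs : S → A → Set S) (π : S → Option A) : Set S :=
  reachAll succs π \ pdom π

/-- `escape succs π s` : frontier states π-reachable from `s`. -/
def escape {S A : Type*} (succs : S → A → Set S) (π : S → Option A) (s : S) : Set S :=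
  reachFrom succs π s ∩ front succs π

/-- A policy is proper iff every domain state reaches a frontier state. -/
def proper {S A : Type*} (succs : S → A → Set S) (π : S → Option A) : Prop :=
  ∀ s ∈ pdom π, (escape succs π s).Nonempty

/-- `π'` is a sub-policy of `π` : restriction of `π` to a subset of its domain. -/
def subpolicy {S A : Type*} (π' π : S → Option A) : Prop :=
  ∀ s a, π' s = some a → π s = some a

/-- Goal-closed: every frontier state is a goal state. -/
def goalClosed {S A : Type*} (succs : S → A → Set S) (Sg : Set S) (π : S → Option A) : Prop :=
  front succs π ⊆ Sg

/-- `remain(π) = (front(π) \ S*) ∪ ({s₀} \ (S* ∪ domain(π)))`. -/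
def remainSet {S A : Type*} (succs : S → A → Set S) (Sg : Set S) (s0 : S)
    (π : S → Option A) : Set S :=
  (front succs π \ Sg) ∪ ({s0} \ (Sg ∪ pdom π))

/-- A solution: a strong-cyclic (goal-closed and proper) policy covering the initial state. -/
def isSolution {S A : Type*} (succs : S → A → Set S) (Sg : Set S) (s0 : S)
    (π : S → Option A) : Prop :=
  goalClosed succs Sg π ∧ proper succs π ∧ s0 ∈ Sg ∪ pdom π

/-- `CRun app succs D F π` : the policy `π` can be produced by a sequence of steps of the
greedy concretizer on input `(D, F)`, starting from the empty policy.  Each step picks an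
unmapped `s ∈ D` and an applicable action `a` with `succs s a ∩ (F ∪ D_handled) ≠ ∅` and
`succs s a ⊆ D ∪ F`. -/
inductive CRun {S A : Type*} [DecidableEq S] (app : S → A → Prop)
    (succs : S → A → Set S) (D F : Set S) : (S → Option A) → Prop
  | nil : CRun app succs D F (fun _ => none)
  | step {π : S → Option A} {s : S} {a : A} :
      CRun app succs D F π → s ∈ D → π s = none → app s a →
      (succs s a ∩ (F ∪ pdom π)).Nonempty →
      succs s a ⊆ D ∪ F →
      CRun app succs D F (Function.update π s (some a))

lemma succs_subset_reachAll {S A : Type*} {succs : S → A → Set S} {π : S → Option A}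
    {c : S} {b : A} (h : π c = some b) : succs c b ⊆ reachAll succs π := by
  intro x hx
  exact Set.mem_biUnion (show c ∈ pdom π by simp [pdom, h])
    (Relation.ReflTransGen.single ⟨b, h, hx⟩)

lemma reachFrom_mono {S A : Type*} {succs : S → A → Set S} {π π' : S → Option A}
    (h : subpolicy π π') (t : S) : reachFrom succs π t ⊆ reachFrom succs π' t := by
  intro x hx
  refine Relation.ReflTransGen.mono ?_ _ _ hx
  rintro u v ⟨b, hb, hv⟩
  exact ⟨b, h u b hb, hv⟩

lemma subpolicy_update {S A : Type*} [DecidableEq S] {π : S → Option A} {s : S} {a : A}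
    (hs : π s = none) : subpolicy π (Function.update π s (some a)) := by
  intro u b hb
  have hus : u ≠ s := by rintro rfl; rw [hs] at hb; cases hb
  rwa [Function.update_of_ne hus]

/-- Concretizer invariant: throughout execution, the partially-built policy `π` satisfies
`domain(π) ⊆ D`, `reach(π) ⊆ D ∪ F`, and every domain state π-reaches a state of `F`. -/
theorem concretizer_invariant {S A : Type*} [DecidableEq S] (app : S → A → Prop)
    (succs : S → A → Set S) (D F : Set S) (hDF : D ∩ F = ∅)
    (π : S → Option A) (hrun : CRun app succs D F π) :
    pdom π ⊆ D ∧ reachAll succs π ⊆ D ∪ F ∧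
      ∀ s ∈ pdom π, (reachFrom succs π s ∩ F).Nonempty := by
  induction hrun with
  | nil =>
    refine ⟨?_, ?_, ?_⟩
    · intro s hs; simp [pdom] at hs
    · intro x hx; simp [reachAll, pdom] at hx
    · intro s hs; simp [pdom] at hs
  | @step π s a hrun hsD hπs happ hne hsub ih =>
    obtain ⟨ih1, ih2, ih3⟩ := ih
    set π' := Function.update π s (some a) with hπ'
    have hsubpol : subpolicy π π' := subpolicy_update hπs
    have hdom : pdom π' ⊆ D := by
      intro t ht
      by_cases hts : t = s
      · exact hts ▸ hsD
      · apply ih1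
        simpa [pdom, hπ', Function.update_of_ne hts] using ht
    refine ⟨hdom, ?_, ?_⟩
    · -- reachability bound
      intro x hx
      simp only [reachAll, Set.mem_iUnion] at hx
      obtain ⟨t, ht, hxt⟩ := hx
      rcases (Relation.ReflTransGen.cases_tail hxt) with rfl | ⟨c, _, b, hcb, hxc⟩
      · exact Or.inl (hdom ht)
      · by_cases hcs : c = s
        · subst hcs
          rw [hπ', Function.update_self] at hcb
          obtain rfl : a = b := Option.some.inj hcb
          exact hsub hxc
        · rw [hπ', Function.update_of_ne hcs] at hcb
          exact ih2 (succs_subset_reachAll hcb hxc)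
    · -- every domain state reaches F
      intro t ht
      by_cases hts : t = s
      · subst hts
        obtain ⟨x, hxsucc, hxF⟩ := hne
        have hstep : Relation.ReflTransGen (pstep succs π') t x :=
          Relation.ReflTransGen.single ⟨a, by simp [hπ'], hxsucc⟩
        rcases hxF with hxF | hxdom
        · exact ⟨x, hstep, hxF⟩
        · obtain ⟨f, hf, hfF⟩ := ih3 x hxdom
          exact ⟨f, hstep.trans (reachFrom_mono hsubpol x hf), hfF⟩
      · have ht' : t ∈ pdom π := by
          simpa [pdom, hπ', Function.update_of_ne hts] using ht
        obtain ⟨f, hf, hfF⟩ := ih3 t ht'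
        exact ⟨f, reachFrom_mono hsubpol t hf, hfF⟩
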